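/- Fix a constant L > 0, a finite nonempty index set N with |N| = m, admissible functions h_i : ℝ → ℝ for i ∈ N, and a nonempty closed convex set 𝒳 ⊆ ℝ. Let β ≤ 1/m be a real number and γ ≤ m a natural number. If X(β,γ) ∩ 𝒳 ≠ ∅, then Y(β,γ) = X(β,γ) ∩ 𝒳. -/

import Mathlib

/-- A function `h : ℝ → ℝ` is admissible with constant `L > 0` if it is convex,
continuously differentiable, its derivative is bounded by `L` and `L`-Lipschitz,
and its set of unconstrained global minimizers is nonempty and compact. -/
def Admissible (L : ℝ) (h : ℝ → ℝ) : Prop :=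
  ConvexOn ℝ Set.univ h ∧ ContDiff ℝ 1 h ∧
    (∀ x : ℝ, |deriv h x| ≤ L) ∧ LipschitzWith L.toNNReal (deriv h) ∧
    {x : ℝ | ∀ y : ℝ, h x ≤ h y}.Nonempty ∧ IsCompact {x : ℝ | ∀ y : ℝ, h x ≤ h y}

/-- A weight vector `α` over the index set `N` is `(β,γ)`-valid if all weights
are nonnegative, they sum to `1`, and at least `γ` indices in `N` have weight
at least `β`. -/
def ValidWeight {ι : Type*} (N : Finset ι) (β : ℝ) (γ : ℕ) (α : ι → ℝ) : Prop :=
  (∀ i ∈ N, 0 ≤ α i) ∧ (∑ i ∈ N, α i = 1) ∧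
    ∃ S ⊆ N, γ ≤ S.card ∧ ∀ i ∈ S, β ≤ α i

open Set Filter Topology


section Aux

variable {ι : Type*}

/-- A finite sum of convex functions is convex. -/
lemma convexOn_wsum (N : Finset ι) (g : ι → ℝ → ℝ)
    (hg : ∀ i ∈ N, ConvexOn ℝ Set.univ (g i)) :
    ConvexOn ℝ Set.univ (fun x => ∑ i ∈ N, g i x) := by
  classical
  induction N using Finset.induction_on with
  | empty => simpa using convexOn_const (0 : ℝ) convex_univ
  | insert _ _ hnotmem ih =>
      simp only [Finset.sum_insert hnotmem]
      exact (hg _ (Finset.mem_insert_self _ _)).add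
        (ih fun i hi => hg i (Finset.mem_insert_of_mem hi))

/-- A convex differentiable function with zero derivative at a point attains its
global minimum there. -/
lemma isGlobalMin_of_deriv_zero {f : ℝ → ℝ} (hconv : ConvexOn ℝ Set.univ f) {x : ℝ}
    (hd : HasDerivAt f 0 x) : ∀ y, f x ≤ f y := by
  intro y
  rcases lt_trichotomy x y with hxy | rfl | hyx
  · have hs := hconv.le_slope_of_hasDerivAt (mem_univ x) (mem_univ y) hxy hd
    have hsl : slope f x y = (f y - f x) / (y - x) := by rw [slope_def_field]
    rw [hsl] at hs
    have h1 := (le_div_iff₀ (by linarith : (0:ℝ) < y - x)).mp hs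
    linarith
  · exact le_rfl
  · have hs := hconv.slope_le_of_hasDerivAt (mem_univ y) (mem_univ x) hyx hd
    have hsl : slope f y x = (f x - f y) / (x - y) := by rw [slope_def_field]
    rw [hsl] at hs
    have h1 := (div_le_iff₀ (by linarith : (0:ℝ) < x - y)).mp hs
    linarith

/-- If `f` has derivative `d` at `x` and `x` minimizes `f` on `[x, z]` with `x < z`,
then `0 ≤ d`. -/
lemma deriv_nonneg_right {f : ℝ → ℝ} {d x z : ℝ} (hd : HasDerivAt f d x) (hxz : x < z)
    (hmin : ∀ y, x ≤ y → y ≤ z → f x ≤ f y) : 0 ≤ d := by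
  have ht : Tendsto (slope f x) (𝓝[>] x) (𝓝 d) :=
    (hasDerivAt_iff_tendsto_slope.mp hd).mono_left
      (nhdsWithin_mono x fun y hy => (ne_of_gt hy : y ≠ x))
  refine ge_of_tendsto ht ?_
  filter_upwards [Ioc_mem_nhdsGT_of_mem (⟨le_rfl, hxz⟩ : x ∈ Set.Ico x z)] with y hy
  have hsl : slope f x y = (f y - f x) / (y - x) := by rw [slope_def_field]
  rw [hsl]
  exact div_nonneg (by linarith [hmin y hy.1.le hy.2]) (by linarith [hy.1])

/-- If `f` has derivative `d` at `x` and `x` minimizes `f` on `[z, x]` with `z < x`,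
then `d ≤ 0`. -/
lemma deriv_nonpos_left {f : ℝ → ℝ} {d x z : ℝ} (hd : HasDerivAt f d x) (hzx : z < x)
    (hmin : ∀ y, z ≤ y → y ≤ x → f x ≤ f y) : d ≤ 0 := by
  have ht : Tendsto (slope f x) (𝓝[<] x) (𝓝 d) :=
    (hasDerivAt_iff_tendsto_slope.mp hd).mono_left
      (nhdsWithin_mono x fun y hy => (ne_of_lt hy : y ≠ x))
  refine le_of_tendsto ht ?_
  filter_upwards [Ico_mem_nhdsLT_of_mem (⟨hzx, le_rfl⟩ : x ∈ Set.Ioc z x)] with y hy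
  have hsl : slope f x y = (f y - f x) / (y - x) := by rw [slope_def_field]
  rw [hsl]
  exact div_nonpos_of_nonneg_of_nonpos (by linarith [hmin y hy.1 hy.2.le]) (by linarith [hy.2])

/-- Mixing a valid weight with the uniform weight stays valid. -/
lemma valid_mix {N : Finset ι} {β : ℝ} {γ : ℕ} {m : ℕ} (hm : N.card = m) (hm0 : 0 < m)
    (hβ : β ≤ 1 / (m : ℝ)) {w : ι → ℝ} (hw : ValidWeight N β γ w) {t : ℝ}
    (ht0 : 0 ≤ t) (ht1 : t ≤ 1) :
    ValidWeight N β γ (fun i => (1 - t) * w i + t * (1 / (m : ℝ))) := by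
  obtain ⟨hpos, hsum, S, hS, hcard, hSβ⟩ := hw
  have hmpos : (0 : ℝ) < m := by exact_mod_cast hm0
  refine ⟨fun i hi => add_nonneg (mul_nonneg (by linarith) (hpos i hi))
    (mul_nonneg ht0 (by positivity)), ?_, S, hS, hcard, ?_⟩
  · rw [Finset.sum_add_distrib, ← Finset.mul_sum, hsum, Finset.sum_const, hm,
      nsmul_eq_mul]
    field_simp
    ring
  · intro i hi
    have hwi := hSβ i hi
    nlinarith [mul_nonneg (sub_nonneg.2 ht1) (sub_nonneg.2 hwi),
      mul_nonneg ht0 (sub_nonneg.2 hβ)]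

/-- From a valid weight with nonpositive pairing against `c` and a uniform weight with
nonnegative pairing, produce a valid weight with zero pairing. -/
lemma mix_zero {N : Finset ι} {β : ℝ} {γ : ℕ} {m : ℕ} (hm : N.card = m) (hm0 : 0 < m)
    (hβ : β ≤ 1 / (m : ℝ)) {w : ι → ℝ} (hw : ValidWeight N β γ w) (c : ι → ℝ)
    (ha : ∑ i ∈ N, w i * c i ≤ 0) (hdu : 0 ≤ ∑ i ∈ N, (1 / (m : ℝ)) * c i) :
    ∃ v : ι → ℝ, ValidWeight N β γ v ∧ ∑ i ∈ N, v i * c i = 0 := by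
  set a := ∑ i ∈ N, w i * c i with ha_def
  set du := ∑ i ∈ N, (1 / (m : ℝ)) * c i with hdu_def
  rcases eq_or_lt_of_le ha with haz | haneg
  · exact ⟨w, hw, haz⟩
  · set t : ℝ := (-a) / (du - a) with ht_def
    have hden : 0 < du - a := by linarith
    have ht0 : 0 ≤ t := div_nonneg (by linarith) hden.le
    have ht1 : t ≤ 1 := by rw [div_le_one hden]; linarith
    refine ⟨fun i => (1 - t) * w i + t * (1 / (m : ℝ)),
      valid_mix hm hm0 hβ hw ht0 ht1, ?_⟩
    have hsum : ∑ i ∈ N, ((1 - t) * w i + t * (1 / (m : ℝ))) * c i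
        = (1 - t) * a + t * du := by
      rw [ha_def, hdu_def, Finset.mul_sum, Finset.mul_sum, ← Finset.sum_add_distrib]
      congr 1; ext i; ring
    rw [hsum, ht_def]
    field_simp
    ring

end Aux

/-- `X(β,γ)`: the union over all `(β,γ)`-valid weight vectors `α` of the set of
unconstrained global minimizers of `x ↦ ∑_{i∈N} α_i h_i(x)`. -/
def XSet {ι : Type*} (N : Finset ι) (h : ι → ℝ → ℝ) (β : ℝ) (γ : ℕ) : Set ℝ :=
  {x : ℝ | ∃ α : ι → ℝ, ValidWeight N β γ α ∧
    ∀ y : ℝ, ∑ i ∈ N, α i * h i x ≤ ∑ i ∈ N, α i * h i y}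

/-- `Y(β,γ)`: the union over all `(β,γ)`-valid weight vectors `α` of the set of
minimizers over the constraint set `𝒳` of `x ↦ ∑_{i∈N} α_i h_i(x)`. -/
def YSet {ι : Type*} (N : Finset ι) (h : ι → ℝ → ℝ) (X : Set ℝ) (β : ℝ) (γ : ℕ) : Set ℝ :=
  {x : ℝ | x ∈ X ∧ ∃ α : ι → ℝ, ValidWeight N β γ α ∧
    ∀ y ∈ X, ∑ i ∈ N, α i * h i x ≤ ∑ i ∈ N, α i * h i y}

/-- Case 3 of Lemma (convex B cons): if `X(β,γ)` intersects the constraint set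
`𝒳`, then `Y(β,γ) = X(β,γ) ∩ 𝒳`. -/
theorem YSet_eq_XSet_inter {ι : Type*} (L : ℝ) (hL : 0 < L)
    (N : Finset ι) (hNne : N.Nonempty) (m : ℕ) (hm : N.card = m)
    (h : ι → ℝ → ℝ) (hadm : ∀ i ∈ N, Admissible L (h i))
    (X : Set ℝ) (hXne : X.Nonempty) (hXcl : IsClosed X) (hXconv : Convex ℝ X)
    (β : ℝ) (hβ : β ≤ 1 / (m : ℝ)) (γ : ℕ) (hγ : γ ≤ m)
    (hint : (XSet N h β γ ∩ X).Nonempty) :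
    YSet N h X β γ = XSet N h β γ ∩ X := by
  classical
  have hm0 : 0 < m := hm ▸ Finset.card_pos.mpr hNne
  have hdiff : ∀ i ∈ N, Differentiable ℝ (h i) := fun i hi =>
    ((hadm i hi).2.1).differentiable one_ne_zero
  ext x
  constructor
  · rintro ⟨hxX, α, hα, hmin⟩
    obtain ⟨z, ⟨α', hα', hmin'⟩, hzX⟩ := hint
    refine ⟨?_, hxX⟩
    have hF : ∀ w : ι → ℝ, HasDerivAt (fun y => ∑ i ∈ N, w i * h i y)
        (∑ i ∈ N, w i * deriv (h i) x) x := fun w =>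
      HasDerivAt.fun_sum fun i hi => ((hdiff i hi x).hasDerivAt).const_mul (w i)
    set c : ι → ℝ := fun i => deriv (h i) x with hc
    have key : ∀ v : ι → ℝ, ValidWeight N β γ v → ∑ i ∈ N, v i * c i = 0 →
        x ∈ XSet N h β γ := by
      intro v hv hzero
      have hconv : ConvexOn ℝ Set.univ (fun y => ∑ i ∈ N, v i * h i y) :=
        convexOn_wsum N _ fun i hi => by
          simpa [smul_eq_mul] using ((hadm i hi).1.smul (hv.1 i hi))
      have hd0 : HasDerivAt (fun y => ∑ i ∈ N, v i * h i y) 0 x := hzero ▸ hF v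
      exact ⟨v, hv, isGlobalMin_of_deriv_zero hconv hd0⟩
    have hgconv : ConvexOn ℝ Set.univ (fun y => ∑ i ∈ N, α' i * h i y) :=
      convexOn_wsum N _ fun i hi => by
        simpa [smul_eq_mul] using ((hadm i hi).1.smul (hα'.1 i hi))
    have negsum : ∀ v : ι → ℝ, ∑ i ∈ N, v i * (fun i => -c i) i = -∑ i ∈ N, v i * c i := by
      intro v; simp [mul_neg]
    rcases lt_trichotomy x z with hlt | heq | hgt
    · have ha : 0 ≤ ∑ i ∈ N, α i * c i :=
        deriv_nonneg_right (hF α) hlt fun y h1 h2 =>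
          hmin y (hXconv.ordConnected.out hxX hzX ⟨h1, h2⟩)
      have hb : ∑ i ∈ N, α' i * c i ≤ 0 := by
        have hs := hgconv.le_slope_of_hasDerivAt (Set.mem_univ x) (Set.mem_univ z) hlt (hF α')
        rw [slope_def_field] at hs
        have hgz : (∑ i ∈ N, α' i * h i z) ≤ ∑ i ∈ N, α' i * h i x := hmin' x
        have h2 : ((∑ i ∈ N, α' i * h i z) - ∑ i ∈ N, α' i * h i x) / (z - x) ≤ 0 :=
          div_nonpos_iff.mpr (Or.inr ⟨by linarith, by linarith⟩)
        simp only [hc]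
        linarith
      rcases le_total (∑ i ∈ N, (1 / (m : ℝ)) * c i) 0 with hdu | hdu
      · obtain ⟨v, hv, hvz⟩ := mix_zero hm hm0 hβ hα (fun i => -c i)
          (by rw [negsum]; linarith) (by rw [negsum]; linarith)
        rw [negsum, neg_eq_zero] at hvz
        exact key v hv hvz
      · obtain ⟨v, hv, hvz⟩ := mix_zero hm hm0 hβ hα' c hb hdu
        exact key v hv hvz
    · subst heq
      exact ⟨α', hα', hmin'⟩
    · have ha : ∑ i ∈ N, α i * c i ≤ 0 :=
        deriv_nonpos_left (hF α) hgt fun y h1 h2 =>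
          hmin y (hXconv.ordConnected.out hzX hxX ⟨h1, h2⟩)
      have hb : 0 ≤ ∑ i ∈ N, α' i * c i := by
        have hs := hgconv.slope_le_of_hasDerivAt (Set.mem_univ z) (Set.mem_univ x) hgt (hF α')
        rw [slope_def_field] at hs
        have hgz : (∑ i ∈ N, α' i * h i z) ≤ ∑ i ∈ N, α' i * h i x := hmin' x
        have h2 : (0:ℝ) ≤ ((∑ i ∈ N, α' i * h i x) - ∑ i ∈ N, α' i * h i z) / (x - z) :=
          div_nonneg (by linarith) (by linarith)
        simp only [hc]
        linarith
      rcases le_total (∑ i ∈ N, (1 / (m : ℝ)) * c i) 0 with hdu | hdu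
      · obtain ⟨v, hv, hvz⟩ := mix_zero hm hm0 hβ hα' (fun i => -c i)
          (by rw [negsum]; linarith) (by rw [negsum]; linarith)
        rw [negsum, neg_eq_zero] at hvz
        exact key v hv hvz
      · obtain ⟨v, hv, hvz⟩ := mix_zero hm hm0 hβ hα c ha hdu
        exact key v hv hvz
  · rintro ⟨⟨α, hα, hmin⟩, hxX⟩
    exact ⟨hxX, α, hα, fun y _ => hmin y⟩
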